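/- Let k be a field of characteristic 2, let w ∈ k be an element that is not a square in k, let K = k(β) where β² = w, and let v ∈ K³ be a vector that is not a K-scalar multiple of any nonzero vector in k³ (i.e., the corresponding point of ℙ²(K) does not lie in ℙ²(k)). Then there exist a matrix g ∈ GL₃(k) and a scalar λ ∈ K× such that λ · (g v) = (0, β, 1). (Every point of ℙ²(K) not defined over k can be moved by a k-linear change of coordinates to (0 : √w : 1).) -/

import Mathlib

/-- In characteristic `2`, with `K = k(√w)` a purely inseparable quadratic extension,
every point of `ℙ²(K)` not defined over `k` can be moved by a `k`-linear change of
coordinates (and rescaling) to `(0 : √w : 1)`. -/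
theorem move_point_to_standard_position_char_two
    (k : Type) [Field k] [CharP k 2]
    (w : k) (hw : ∀ a : k, a ^ 2 ≠ w)
    (K : Type) [Field K] [Algebra k K]
    (β : K) (hβ : β ^ 2 = algebraMap k K w)
    (hgen : Algebra.adjoin k ({β} : Set K) = ⊤)
    (v : Fin 3 → K)
    (hv : ∀ u : Fin 3 → k, u ≠ 0 → ∀ μ : K, v ≠ μ • fun i => algebraMap k K (u i)) :
    ∃ (g : GL (Fin 3) k) (lam : K), lam ≠ 0 ∧
      lam • ((g : Matrix (Fin 3) (Fin 3) k).map (algebraMap k K)).mulVec v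
        = ![0, β, 1] := by
  classical
  set φ := algebraMap k K with hφ
  have hinj : Function.Injective φ := RingHom.injective φ
  -- `1, β` are linearly independent over `k`
  have hind : ∀ a b : k, φ a + b • β = 0 → a = 0 ∧ b = 0 := by
    intro a b h
    by_cases hb : b = 0
    · subst hb
      simp only [zero_smul, add_zero] at h
      exact ⟨hinj (by simpa using h), rfl⟩
    · exfalso
      rw [Algebra.smul_def] at h
      have h1 : φ b * β = - φ a := by linear_combination h
      have h2 : b ^ 2 * w = a ^ 2 := by
        apply hinj
        rw [map_mul, map_pow, map_pow, ← hβ, ← mul_pow, h1]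
        ring
      have hb2 : b ^ 2 ≠ 0 := pow_ne_zero _ hb
      exact hw (a / b) (by field_simp; linear_combination -h2)
  -- `K` is spanned by `1` and `β`
  have hspan : ∀ c : K, ∃ a b : k, c = φ a + b • β := by
    intro c
    have hone : (1 : K) ∈ Submodule.span k ({1, β} : Set K) :=
      Submodule.subset_span (by simp)
    have hmul : ∀ X Y, X ∈ Submodule.span k ({1, β} : Set K) →
        Y ∈ Submodule.span k ({1, β} : Set K) →
        X * Y ∈ Submodule.span k ({1, β} : Set K) := by
      intro X Y hX hY
      obtain ⟨a, b, hab⟩ := Submodule.mem_span_pair.mp hX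
      obtain ⟨c, d, hcd⟩ := Submodule.mem_span_pair.mp hY
      refine Submodule.mem_span_pair.mpr ⟨a * c + b * d * w, a * d + b * c, ?_⟩
      rw [← hab, ← hcd]
      simp only [Algebra.smul_def, map_add, map_mul, mul_one]
      linear_combination -(φ b * φ d) * hβ
    have hle : Algebra.adjoin k ({β} : Set K) ≤
        (Submodule.span k ({1, β} : Set K)).toSubalgebra hone hmul := by
      apply Algebra.adjoin_le
      intro x hx
      rw [Set.mem_singleton_iff] at hx
      subst hx
      exact Submodule.subset_span (by simp)
    have hc : c ∈ Submodule.span k ({1, β} : Set K) := by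
      have : c ∈ Algebra.adjoin k ({β} : Set K) := hgen ▸ trivial
      exact hle this
    obtain ⟨a, b, hab⟩ := Submodule.mem_span_pair.mp hc
    exact ⟨a, b, by rw [← hab, Algebra.algebraMap_eq_smul_one]⟩
  choose x y hxy using fun i => hspan (v i)
  -- v is nonzero
  have hv0 : v ≠ 0 := by
    intro h0
    refine hv (fun _ => 1) (fun h => ?_) 0 (by simp [h0])
    have := congrFun h 0
    simp at this
  have hzero : x = 0 → y = 0 → False := by
    intro hx hy
    apply hv0
    funext i
    rw [hxy i, hx, hy]
    simp
  -- x and y are linearly independent over k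
  have hpair : ∀ c d : k, c • x + d • y = 0 → c = 0 ∧ d = 0 := by
    intro c d h
    rcases eq_or_ne d 0 with hd | hd
    · subst hd
      rcases eq_or_ne c 0 with hc | hc
      · exact ⟨hc, rfl⟩
      · exfalso
        have hx : x = 0 := by
          have := h
          simp only [zero_smul, add_zero] at this
          exact (smul_eq_zero.mp this).resolve_left hc
        have hy : y ≠ 0 := fun hy => hzero hx hy
        apply hv y hy β
        funext i
        rw [hxy i, hx]
        simp [Algebra.smul_def, mul_comm, hφ]
    · exfalso
      have hyx : y = (-(c / d)) • x := by
        funext i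
        have := congrFun h i
        simp only [Pi.add_apply, Pi.smul_apply, smul_eq_mul, Pi.zero_apply] at this
        simp only [Pi.smul_apply, smul_eq_mul]
        field_simp
        linear_combination this
      have hx : x ≠ 0 := by
        intro hx
        exact hzero hx (by rw [hyx, hx, smul_zero])
      apply hv x hx (1 + (-(c / d)) • β)
      funext i
      rw [hxy i, hyx]
      simp only [Pi.smul_apply, smul_eq_mul, Pi.add_apply]
      simp only [Algebra.smul_def, map_mul, map_neg]
      ring
  -- find z completing x, y to a basis
  have hspan_ne : Submodule.span k ({x, y} : Set (Fin 3 → k)) ≠ ⊤ := by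
    intro htop
    have h1 : Module.finrank k (Submodule.span k ({x, y} : Set (Fin 3 → k))) ≤ 2 := by
      refine le_trans (finrank_span_le_card _) ?_
      have : ({x, y} : Set (Fin 3 → k)).toFinset ⊆ {x, y} := by
        intro a ha
        simpa using ha
      calc ({x, y} : Set (Fin 3 → k)).toFinset.card ≤ ({x, y} : Finset (Fin 3 → k)).card :=
            Finset.card_le_card this
        _ ≤ 2 := Finset.card_insert_le _ _ |>.trans (by simp)
    rw [htop] at h1
    have h3 : Module.finrank k (⊤ : Submodule k (Fin 3 → k)) = 3 := by
      rw [finrank_top, Module.finrank_fin_fun]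
    omega
  obtain ⟨z, hz⟩ : ∃ z, z ∉ Submodule.span k ({x, y} : Set (Fin 3 → k)) := by
    by_contra hc
    push_neg at hc
    exact hspan_ne (Submodule.eq_top_iff'.mpr hc)
  -- the matrix with columns z, y, x
  set M : Matrix (Fin 3) (Fin 3) k := Matrix.of fun i j => ![z, y, x] j i with hM
  have hMmulVec : ∀ c : Fin 3 → k,
      M.mulVec c = c 0 • z + c 1 • y + c 2 • x := by
    intro c
    funext i
    simp [hM, Matrix.mulVec, dotProduct, Fin.sum_univ_three, mul_comm]
  have hdet : M.det ≠ 0 := by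
    intro hdet
    obtain ⟨c, hc0, hc⟩ := Matrix.exists_mulVec_eq_zero_iff.mpr hdet
    rw [hMmulVec] at hc
    have hc00 : c 0 = 0 := by
      by_contra hc00
      apply hz
      refine Submodule.mem_span_pair.mpr ⟨-(c 2 / c 0), -(c 1 / c 0), ?_⟩
      funext i
      have := congrFun hc i
      simp only [Pi.add_apply, Pi.smul_apply, smul_eq_mul, Pi.zero_apply] at this ⊢
      apply mul_left_cancel₀ hc00
      field_simp
      linear_combination -this
    rw [hc00, zero_smul, zero_add] at hc
    have := hpair (c 2) (c 1) (by rw [add_comm] at hc; exact hc)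
    apply hc0
    funext i
    fin_cases i <;> simp [hc00, this.1, this.2]
  have hunit : IsUnit M := (Matrix.isUnit_iff_isUnit_det M).mpr (isUnit_iff_ne_zero.mpr hdet)
  refine ⟨hunit.unit⁻¹, 1, one_ne_zero, ?_⟩
  rw [one_smul]
  have hvM : v = (M.map φ).mulVec ![0, β, 1] := by
    funext i
    rw [hxy i]
    simp [hM, Matrix.mulVec, dotProduct, Fin.sum_univ_three, Matrix.map_apply,
      Algebra.smul_def]
    ring
  have hAM : ((hunit.unit⁻¹ : GL (Fin 3) k) : Matrix (Fin 3) (Fin 3) k) * M = 1 := by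
    have h := hunit.unit.inv_mul
    rwa [hunit.unit_spec] at h
  rw [hvM, Matrix.mulVec_mulVec, ← Matrix.map_mul, hAM, Matrix.map_one φ (map_zero φ) (map_one φ),
    Matrix.one_mulVec]
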